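/- Let Ω : ℝ → ℝ be positive differentiable with G = 2Ω'/Ω, and define modulated variables B̄ = Ω^{2m}B, B̄_S = Ω^{2m}B_S, B̄_N = Ω^{2m}B_N, Ḡ_S = Ω²G_S, Ḡ_N = Ω²G_N. If B, B_S, B_N, G_S, G_N satisfy the equations B' + mBG + 4(B_N G_N + B_S G_S) = 0, B_S' + mB_S G + BG_S - 2B_N G_R = 0, B_N' + mB_N G + BG_N + 2B_S G_R = 0, G_N' + G G_N - f G_S + 2(ε₂ m/(m-1))B_N = 0, G_S' + G G_S + f G_N + 2(ε₂ m/(m-1))B_S = 0, with G_R = c₀/Ω² - f/2, then the modulated variables satisfy: B̄' + 4(B̄_N Ḡ_N + B̄_S Ḡ_S)/Ω² = 0; B̄_S' + f B̄_N + (B̄ Ḡ_S - 2c₀ B̄_N)/Ω² = 0; B̄_N' - f B̄_S + (B̄ Ḡ_N + 2c₀ B̄_S)/Ω² = 0; Ḡ_S' + f Ḡ_N + (2ε₂ m/(m-1))·B̄_S/Ω^{2(m-1)} = 0; Ḡ_N' - f Ḡ_S + (2ε₂ m/(m-1))·B̄_N/Ω^{2(m-1)} = 0. -/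

import Mathlib

/-- reduction of the system (b43) to the modulated system (5.3.10). -/
theorem stmt4 (m f c₀ : ℝ) (hm : m ≠ 1) (B B_S B_N G_S G_N G_R ε₂ Ω : ℝ → ℝ)
    (hΩpos : ∀ t, 0 < Ω t) (hΩdiff : Differentiable ℝ Ω)
    (G : ℝ → ℝ) (hG : ∀ t, G t = 2 * deriv Ω t / Ω t)
    (hGR : ∀ t, G_R t = c₀ / (Ω t) ^ 2 - f / 2)
    (hB : ∀ t, HasDerivAt B (-(m * B t * G t + 4 * (B_N t * G_N t + B_S t * G_S t))) t)
    (hBS : ∀ t, HasDerivAt B_S (-(m * B_S t * G t + B t * G_S t - 2 * B_N t * G_R t)) t)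
    (hBN : ∀ t, HasDerivAt B_N (-(m * B_N t * G t + B t * G_N t + 2 * B_S t * G_R t)) t)
    (hGN : ∀ t, HasDerivAt G_N (-(G t * G_N t - f * G_S t
      + 2 * (ε₂ t * m / (m - 1)) * B_N t)) t)
    (hGS : ∀ t, HasDerivAt G_S (-(G t * G_S t + f * G_N t
      + 2 * (ε₂ t * m / (m - 1)) * B_S t)) t)
    (Bb BbS BbN GbS GbN : ℝ → ℝ)
    (hBb : ∀ t, Bb t = (Ω t) ^ (2 * m) * B t)
    (hBbS : ∀ t, BbS t = (Ω t) ^ (2 * m) * B_S t)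
    (hBbN : ∀ t, BbN t = (Ω t) ^ (2 * m) * B_N t)
    (hGbS : ∀ t, GbS t = (Ω t) ^ 2 * G_S t)
    (hGbN : ∀ t, GbN t = (Ω t) ^ 2 * G_N t) :
    (∀ t, HasDerivAt Bb (-(4 * (BbN t * GbN t + BbS t * GbS t) / (Ω t) ^ 2)) t) ∧
    (∀ t, HasDerivAt BbS (-(f * BbN t + (Bb t * GbS t - 2 * c₀ * BbN t) / (Ω t) ^ 2)) t) ∧
    (∀ t, HasDerivAt BbN (-(-(f * BbS t) + (Bb t * GbN t + 2 * c₀ * BbS t) / (Ω t) ^ 2)) t) ∧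
    (∀ t, HasDerivAt GbS (-(f * GbN t
      + (2 * ε₂ t * m / (m - 1)) * BbS t / (Ω t) ^ (2 * (m - 1)))) t) ∧
    (∀ t, HasDerivAt GbN (-(-(f * GbS t)
      + (2 * ε₂ t * m / (m - 1)) * BbN t / (Ω t) ^ (2 * (m - 1)))) t) := by

  have hΩ' : ∀ t, HasDerivAt Ω (deriv Ω t) t := fun t => (hΩdiff t).hasDerivAt
  have hΩne : ∀ t, Ω t ≠ 0 := fun t => (hΩpos t).ne'
  have hP : ∀ t, HasDerivAt (fun s => Ω s ^ (2*m))
      (deriv Ω t * (2*m) * Ω t ^ (2*m - 1)) t :=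
    fun t => (hΩ' t).rpow_const (Or.inl (hΩne t))
  have hQ : ∀ t, HasDerivAt (fun s => Ω s ^ 2) (2 * Ω t * deriv Ω t) t := by
    intro t
    have := (hΩ' t).fun_pow 2
    simpa [mul_comm, mul_assoc, mul_left_comm] using this
  have e1 : ∀ t, Ω t ^ (2*m - 1) = Ω t ^ (2*m) / Ω t := fun t => by
    rw [Real.rpow_sub (hΩpos t)]; norm_num
  have e2 : ∀ t, Ω t ^ (2*(m-1)) = Ω t ^ (2*m) / Ω t ^ 2 := fun t => by
    rw [show (2:ℝ)*(m-1) = 2*m - 2 by ring, Real.rpow_sub (hΩpos t)]; norm_num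
  have hBbf : Bb = fun t => Ω t ^ (2*m) * B t := funext hBb
  have hBbSf : BbS = fun t => Ω t ^ (2*m) * B_S t := funext hBbS
  have hBbNf : BbN = fun t => Ω t ^ (2*m) * B_N t := funext hBbN
  have hGbSf : GbS = fun t => Ω t ^ 2 * G_S t := funext hGbS
  have hGbNf : GbN = fun t => Ω t ^ 2 * G_N t := funext hGbN
  have h1 : m - 1 ≠ 0 := sub_ne_zero.mpr hm
  have hw : ∀ t, Ω t ^ (2*m) ≠ 0 := fun t => (Real.rpow_pos_of_pos (hΩpos t) _).ne'
  refine ⟨fun t => ?_, fun t => ?_, fun t => ?_, fun t => ?_, fun t => ?_⟩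
  · rw [hBbf]
    convert (hP t).fun_mul (hB t) using 1
    · rfl
    · rfl
    rw [hBbN t, hBbS t, hGbN t, hGbS t, e1 t, hG t]
    field_simp [hΩne t, hw t, h1]
    ring
  · rw [hBbSf]
    convert (hP t).fun_mul (hBS t) using 1
    · rfl
    · rfl
    rw [hBb t, hBbN t, hGbS t, e1 t, hG t, hGR t]
    field_simp [hΩne t, hw t, h1]
    ring
  · rw [hBbNf]
    convert (hP t).fun_mul (hBN t) using 1
    · rfl
    · rfl
    rw [hBb t, hBbS t, hGbN t, e1 t, hG t, hGR t]
    field_simp [hΩne t, hw t, h1]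
    ring
  · rw [hGbSf]
    convert (hQ t).fun_mul (hGS t) using 1
    · rfl
    · rfl
    rw [hGbN t, hBbS t, e2 t, hG t]
    field_simp [hΩne t, hw t, h1]
    ring
  · rw [hGbNf]
    convert (hQ t).fun_mul (hGN t) using 1
    · rfl
    · rfl
    rw [hGbS t, hBbN t, e2 t, hG t]
    field_simp [hΩne t, hw t, h1]
    ring
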